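/- Let f : ℝ^{d×n} × ℝ^{d×k} → ℝ^{d×m} satisfy f(QX, QZ) = Q f(X, Z) for every orthogonal Q ∈ ℝ^{d×d}, all X ∈ ℝ^{d×n} and Z ∈ ℝ^{d×k}. Then there exist functions g₁ (into ℝ^{n×m}) and g₂ (into ℝ^{k×m}) of the triple (XᵀX, ZᵀX, ZᵀZ) such that f(X, Z) = X·g₁(XᵀX, ZᵀX, ZᵀZ) + Z·g₂(XᵀX, ZᵀX, ZᵀZ). -/

import Mathlib

open Matrix

set_option linter.unusedSectionVars false
noncomputable section
variable {d : ℕ} {ι κ : Type*} [Fintype ι] [Fintype κ] [DecidableEq ι]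

def matLin (W : Matrix (Fin d) ι ℝ) : (ι → ℝ) →ₗ[ℝ] EuclideanSpace ℝ (Fin d) where
  toFun c := WithLp.toLp 2 (W.mulVec c)
  map_add' x y := by rw [W.mulVec_add]; rfl
  map_smul' r x := by rw [W.mulVec_smul]; rfl

lemma inner_euclid (x y : EuclideanSpace ℝ (Fin d)) :
    (inner ℝ x y : ℝ) = ∑ i, x i * y i := by
  simp [PiLp.inner_apply, RCLike.inner_apply, conj_trivial, mul_comm]

lemma inner_matLin (W W' : Matrix (Fin d) ι ℝ) (c c' : ι → ℝ) :
    (inner ℝ (matLin W c) (matLin W' c') : ℝ) = c ⬝ᵥ ((Wᵀ * W') *ᵥ c') := by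
  rw [inner_euclid]
  show ∑ i, (W *ᵥ c) i * (W' *ᵥ c') i = _
  rw [show (∑ i, (W *ᵥ c) i * (W' *ᵥ c') i) = (W *ᵥ c) ⬝ᵥ (W' *ᵥ c') from rfl,
    ← mulVec_mulVec]
  conv_rhs => rw [dotProduct_mulVec, vecMul_transpose]

def linMat (A : EuclideanSpace ℝ (Fin d) →ₗ[ℝ] EuclideanSpace ℝ (Fin d)) :
    Matrix (Fin d) (Fin d) ℝ :=
  Matrix.of fun i j => A (WithLp.toLp 2 (Pi.single j 1)) i

lemma linMat_mulVec (A : EuclideanSpace ℝ (Fin d) →ₗ[ℝ] EuclideanSpace ℝ (Fin d))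
    (v : EuclideanSpace ℝ (Fin d)) : (linMat A) *ᵥ v = A v := by
  have hv : (∑ j, v j • WithLp.toLp 2 (Pi.single j 1 : Fin d → ℝ)) = v := by
    ext i
    simp [Pi.single_apply]
  conv_rhs => rw [← hv]
  rw [map_sum]
  simp only [_root_.map_smul]
  funext i
  show ∑ j, A (WithLp.toLp 2 (Pi.single j 1)) i * v j = _
  rw [WithLp.ofLp_sum, Finset.sum_apply]
  refine Finset.sum_congr rfl fun j _ => ?_
  show A (WithLp.toLp 2 (Pi.single j 1)) i * v j = (v j • A (WithLp.toLp 2 (Pi.single j 1))).ofLp i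
  simp [mul_comm]

lemma linMat_orth (A : EuclideanSpace ℝ (Fin d) →ₗ[ℝ] EuclideanSpace ℝ (Fin d))
    (h : ∀ x y : EuclideanSpace ℝ (Fin d), (inner ℝ (A x) (A y) : ℝ) = inner ℝ x y) :
    (linMat A)ᵀ * (linMat A) = 1 := by
  ext i j
  have h1 := h (WithLp.toLp 2 (Pi.single i 1)) (WithLp.toLp 2 (Pi.single j 1))
  rw [inner_euclid, inner_euclid] at h1
  show ∑ l, A (WithLp.toLp 2 (Pi.single i 1)) l * A (WithLp.toLp 2 (Pi.single j 1)) l = (1 : Matrix (Fin d) (Fin d) ℝ) i j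
  rw [h1, Matrix.one_apply]
  simp [Pi.single_apply, eq_comm]

lemma mul_col_eq (Q : Matrix (Fin d) (Fin d) ℝ) (W : Matrix (Fin d) ι ℝ) (j : ι) :
    (fun i => (Q * W) i j) = Q *ᵥ (fun i => W i j) := rfl

lemma exists_orth_of_gram_eq (W W' : Matrix (Fin d) ι ℝ)
    (h : Wᵀ * W = W'ᵀ * W') :
    ∃ Q : Matrix (Fin d) (Fin d) ℝ, Qᵀ * Q = 1 ∧ Q * W = W' := by
  classical
  set S : (ι → ℝ) →ₗ[ℝ] EuclideanSpace ℝ (Fin d) := matLin W with hS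
  set S' : (ι → ℝ) →ₗ[ℝ] EuclideanSpace ℝ (Fin d) := matLin W' with hS'
  have hker : LinearMap.ker S ≤ LinearMap.ker S' := by
    intro c hc
    rw [LinearMap.mem_ker] at *
    have h1 : (inner ℝ (S' c) (S' c) : ℝ) = 0 := by
      rw [hS', inner_matLin, ← h, ← inner_matLin (d := d), ← hS, hc, inner_zero_left]
    exact inner_self_eq_zero.mp h1
  let e := S.quotKerEquivRange
  let φ : (LinearMap.range S) →ₗ[ℝ] EuclideanSpace ℝ (Fin d) :=
    ((LinearMap.ker S).liftQ S' hker).comp (e.symm : _ →ₗ[ℝ] _)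
  have hφ : ∀ c : ι → ℝ, φ ⟨S c, LinearMap.mem_range_self S c⟩ = S' c := by
    intro c
    have h2 : e.symm ⟨S c, LinearMap.mem_range_self S c⟩ = (LinearMap.ker S).mkQ c :=
      S.quotKerEquivRange_symm_apply_image c (LinearMap.mem_range_self S c)
    show ((LinearMap.ker S).liftQ S' hker) (e.symm ⟨S c, LinearMap.mem_range_self S c⟩) = S' c
    rw [h2]
    exact Submodule.liftQ_apply _ _ _
  have hinner : ∀ x y : LinearMap.range S, (inner ℝ (φ x) (φ y) : ℝ) = inner ℝ x y := by
    rintro ⟨x, cx, rfl⟩ ⟨y, cy, rfl⟩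
    rw [Submodule.coe_inner, hφ, hφ]
    show (inner ℝ (S' cx) (S' cy) : ℝ) = inner ℝ (S cx) (S cy)
    rw [hS', hS, inner_matLin, inner_matLin, h]
  let L : (LinearMap.range S) →ₗᵢ[ℝ] EuclideanSpace ℝ (Fin d) :=
    φ.isometryOfInner hinner
  let T := L.extend
  refine ⟨linMat T.toLinearMap, linMat_orth _ (fun x y => T.inner_map_map x y), ?_⟩
  ext i j
  have hcol : (fun l => W l j) = S (Pi.single j 1) := by
    show _ = W *ᵥ Pi.single j 1
    simp [mulVec_single]; rfl
  have h3 : (fun i => (linMat T.toLinearMap * W) i j) = fun i => W' i j := by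
    rw [mul_col_eq, hcol, linMat_mulVec]
    have h4 : T (S (Pi.single j 1)) = L ⟨S (Pi.single j 1), LinearMap.mem_range_self _ _⟩ :=
      L.extend_apply ⟨S (Pi.single j 1), LinearMap.mem_range_self _ _⟩
    show (T (S (Pi.single j 1))).ofLp = _
    rw [h4]
    show (φ _).ofLp = _
    rw [hφ]
    show W' *ᵥ Pi.single j 1 = _
    simp [mulVec_single]; rfl
  exact congrFun h3 i

lemma exists_factor (W : Matrix (Fin d) ι ℝ) (F : Matrix (Fin d) κ ℝ)
    (hF : ∀ Q : Matrix (Fin d) (Fin d) ℝ, Qᵀ * Q = 1 → Q * W = W → Q * F = F) :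
    ∃ C : Matrix ι κ ℝ, F = W * C := by
  classical
  set S : (ι → ℝ) →ₗ[ℝ] EuclideanSpace ℝ (Fin d) := matLin W with hS
  set K := LinearMap.range S with hK
  let π : EuclideanSpace ℝ (Fin d) →ₗ[ℝ] EuclideanSpace ℝ (Fin d) :=
    K.subtype.comp (K.orthogonalProjectionOnto).toLinearMap
  have hπK : ∀ v, π v ∈ K := fun v => (K.orthogonalProjectionOnto v).2
  have hπid : ∀ v ∈ K, π v = v := by
    intro v hv
    show ((K.orthogonalProjectionOnto v : K) : EuclideanSpace ℝ (Fin d)) = v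
    rw [← K.starProjection_apply, K.starProjection_eq_self_iff.mpr hv]
  have hsym : ∀ x y : EuclideanSpace ℝ (Fin d), (inner ℝ (π x) y : ℝ) = inner ℝ (π x) (π y) := by
    intro x y
    have h0 : (inner ℝ (π x) (y - π y) : ℝ) = 0 :=
      Submodule.inner_right_of_mem_orthogonal (hπK x)
        (K.sub_starProjection_mem_orthogonal y)
    rw [inner_sub_right] at h0
    linarith
  let ref : EuclideanSpace ℝ (Fin d) →ₗ[ℝ] EuclideanSpace ℝ (Fin d) :=
    (2 : ℝ) • π - LinearMap.id
  have href : ∀ x y : EuclideanSpace ℝ (Fin d), (inner ℝ (ref x) (ref y) : ℝ) = inner ℝ x y := by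
    intro x y
    show (inner ℝ ((2:ℝ) • π x - x) ((2:ℝ) • π y - y) : ℝ) = inner ℝ x y
    rw [inner_sub_left, inner_sub_right, inner_sub_right, real_inner_smul_left,
      real_inner_smul_left, real_inner_smul_right, real_inner_smul_right]
    have h1 := hsym x y
    have h2 : (inner ℝ x (π y) : ℝ) = inner ℝ (π x) (π y) :=
      (real_inner_comm (π y) x).trans ((hsym y x).trans (real_inner_comm (π x) (π y)))
    linarith
  have hrefW : linMat ref * W = W := by
    ext i j
    have hcol : (fun l => W l j) = S (Pi.single j 1) := by
      show _ = W *ᵥ Pi.single j 1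
      simp [mulVec_single]; rfl
    have h3 : (fun i => (linMat ref * W) i j) = fun i => W i j := by
      rw [mul_col_eq, hcol, linMat_mulVec]
      show ((2 : ℝ) • π (S (Pi.single j 1)) - S (Pi.single j 1)).ofLp = _
      rw [hπid _ (LinearMap.mem_range_self S _)]
      congr 1
      module
    exact congrFun h3 i
  have hQF := hF (linMat ref) (linMat_orth _ href) hrefW
  have hcolK : ∀ j : κ, ∃ c : ι → ℝ, W *ᵥ c = fun i => F i j := by
    intro j
    set v : EuclideanSpace ℝ (Fin d) := WithLp.toLp 2 (fun i => F i j) with hv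
    have h5 : v = ref v := by
      show WithLp.toLp 2 (fun i => F i j) = ref (WithLp.toLp 2 (fun i => F i j))
      apply WithLp.ofLp_injective 2
      rw [← linMat_mulVec, WithLp.ofLp_toLp, ← mul_col_eq, hQF]
    have h7 : (2 : ℝ) • π v - v = v := h5.symm
    have h8 : (2 : ℝ) • π v = (2 : ℝ) • v := by
      rw [sub_eq_iff_eq_add] at h7
      rw [h7]
      exact (two_smul ℝ v).symm
    have h6 : π v = v := smul_right_injective _ (two_ne_zero) h8
    have h9 : v ∈ K := by rw [← h6]; exact hπK _
    obtain ⟨c, hc⟩ := h9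
    exact ⟨c, congrArg WithLp.ofLp hc⟩
  choose c hc using hcolK
  refine ⟨Matrix.of fun i j => c j i, ?_⟩
  ext i j
  have := congrFun (hc j) i
  show F i j = ∑ l, W i l * c j l
  rw [← this]
  rfl

end


/-- Proposition 2: an orthogonal equivariant seq2seq function with knowledge,
`f(QX, QZ) = Q f(X, Z)`, can be written as
`f(X,Z) = X g₁(XᵀX, ZᵀX, ZᵀZ) + Z g₂(XᵀX, ZᵀX, ZᵀZ)`. -/
theorem orth_equivariant_with_knowledge_representation (d n k m : ℕ)
    (hd : 0 < d) (hn : 0 < n) (hk : 0 < k) (hm : 0 < m)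
    (f : Matrix (Fin d) (Fin n) ℝ → Matrix (Fin d) (Fin k) ℝ → Matrix (Fin d) (Fin m) ℝ)
    (hf : ∀ (Q : Matrix (Fin d) (Fin d) ℝ) (X : Matrix (Fin d) (Fin n) ℝ)
      (Z : Matrix (Fin d) (Fin k) ℝ), Qᵀ * Q = 1 → f (Q * X) (Q * Z) = Q * f X Z) :
    ∃ (g₁ : Matrix (Fin n) (Fin n) ℝ → Matrix (Fin k) (Fin n) ℝ →
        Matrix (Fin k) (Fin k) ℝ → Matrix (Fin n) (Fin m) ℝ)
      (g₂ : Matrix (Fin n) (Fin n) ℝ → Matrix (Fin k) (Fin n) ℝ →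
        Matrix (Fin k) (Fin k) ℝ → Matrix (Fin k) (Fin m) ℝ),
      ∀ (X : Matrix (Fin d) (Fin n) ℝ) (Z : Matrix (Fin d) (Fin k) ℝ),
        f X Z = X * g₁ (Xᵀ * X) (Zᵀ * X) (Zᵀ * Z) + Z * g₂ (Xᵀ * X) (Zᵀ * X) (Zᵀ * Z) := by
  classical
  have hcol : ∀ (X : Matrix (Fin d) (Fin n) ℝ) (Z : Matrix (Fin d) (Fin k) ℝ),
      ∃ C : Matrix (Fin n ⊕ Fin k) (Fin m) ℝ, f X Z = fromCols X Z * C := by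
    intro X Z
    apply exists_factor
    intro Q hQ hQW
    rw [mul_fromCols] at hQW
    obtain ⟨hX, hZ⟩ := fromCols_inj hQW
    have := hf Q X Z hQ
    rw [hX, hZ] at this
    exact this.symm
  choose C hC using hcol
  set P : Matrix (Fin n) (Fin n) ℝ → Matrix (Fin k) (Fin n) ℝ →
      Matrix (Fin k) (Fin k) ℝ → Prop := fun a b c =>
    ∃ p : Matrix (Fin d) (Fin n) ℝ × Matrix (Fin d) (Fin k) ℝ,
      p.1ᵀ * p.1 = a ∧ p.2ᵀ * p.1 = b ∧ p.2ᵀ * p.2 = c with hP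
  refine ⟨fun a b c => if h : P a b c then toRows₁ (C h.choose.1 h.choose.2) else 0,
          fun a b c => if h : P a b c then toRows₂ (C h.choose.1 h.choose.2) else 0, ?_⟩
  intro X Z
  have hPX : P (Xᵀ * X) (Zᵀ * X) (Zᵀ * Z) := ⟨(X, Z), rfl, rfl, rfl⟩
  simp only [dif_pos hPX]
  obtain ⟨h1, h2, h3⟩ := hPX.choose_spec
  set X₀ := hPX.choose.1 with hX₀
  set Z₀ := hPX.choose.2 with hZ₀
  have hgram : (fromCols X₀ Z₀)ᵀ * fromCols X₀ Z₀ =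
      (fromCols X Z)ᵀ * fromCols X Z := by
    rw [transpose_fromCols, transpose_fromCols, fromRows_mul_fromCols,
      fromRows_mul_fromCols, h1, h2, h3]
    have h4 : X₀ᵀ * Z₀ = Xᵀ * Z := by
      have := congrArg Matrix.transpose h2
      rwa [transpose_mul, transpose_mul, transpose_transpose, transpose_transpose] at this
    rw [h4]
  obtain ⟨Q, hQ, hQW⟩ := exists_orth_of_gram_eq _ _ hgram
  rw [mul_fromCols] at hQW
  obtain ⟨hX, hZ⟩ := fromCols_inj hQW
  have heq := hf Q X₀ Z₀ hQ
  rw [hX, hZ] at heq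
  rw [heq, hC X₀ Z₀, ← Matrix.mul_assoc, mul_fromCols, hX, hZ]
  conv_lhs => rw [← fromRows_toRows (C X₀ Z₀)]
  rw [fromCols_mul_fromRows]
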